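/- Let P_3 denote the path with three vertices and two edges. There exists an absolute constant δ > 0 such that the following holds for all integers ℓ ≥ 1 and all sufficiently large n. In every 2-coloring of the edges of the blowup C_{2ℓ+1}[n] of the odd cycle C_{2ℓ+1}, with parts V_1, …, V_{2ℓ+1} along the cycle, there exist three consecutive parts V_{i−1}, V_i, V_{i+1} (indices modulo 2ℓ+1) containing at least (δ/2) n³ monochromatic canonical copies of P_3, i.e., monochromatic paths u v w with u ∈ V_{i−1}, v ∈ V_i, w ∈ V_{i+1}. -/

import Mathlib

open Finset




lemma pm_sum {n : ℕ} (f : Fin n → ℝ) (hf : ∀ y, f y = 1 ∨ f y = -1) (g : ℝ → ℝ) :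
    ∑ y, g (f y) = (univ.filter (fun y => f y = 1)).card * g 1
      + ((n:ℝ) - (univ.filter (fun y => f y = 1)).card) * g (-1) := by
  classical
  rw [← sum_filter_add_sum_filter_not univ (fun y => f y = 1)]
  have h1 : ∑ y ∈ univ.filter (fun y => f y = 1), g (f y)
      = (univ.filter (fun y => f y = 1)).card * g 1 := by
    rw [sum_congr rfl (fun y hy => by rw [(mem_filter.mp hy).2]), sum_const, nsmul_eq_mul]
  have h2 : ∑ y ∈ univ.filter (fun y => ¬ f y = 1), g (f y)
      = ((univ.filter (fun y => ¬ f y = 1)).card : ℝ) * g (-1) := by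
    rw [sum_congr rfl (fun y hy => by
      rw [((hf y).resolve_left (mem_filter.mp hy).2 : f y = -1)]), sum_const, nsmul_eq_mul]
  have hcompl : ((univ.filter (fun y => ¬ f y = 1)).card : ℝ)
      = (n:ℝ) - (univ.filter (fun y => f y = 1)).card := by
    have := card_filter_add_card_filter_not (s := (univ : Finset (Fin n)))
      (p := fun y => f y = 1)
    simp only [card_univ, Fintype.card_fin] at this
    have hle : (univ.filter (fun y => f y = 1)).card ≤ n := by
      simpa using (card_filter_le univ (fun y => f y = 1))
    push_cast [show (univ.filter (fun y => ¬ f y = 1)).card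
        = n - (univ.filter (fun y => f y = 1)).card by omega, Nat.cast_sub hle]
    ring
  rw [h1, h2, hcompl]

lemma maj_row {n : ℕ} (f : Fin n → ℝ) (hf : ∀ y, f y = 1 ∨ f y = -1) :
    (n:ℝ) * ∑ y, |f y - (if 0 ≤ ∑ y, f y then 1 else -1)| ≤ (n:ℝ)^2 - (∑ y, f y)^2 := by
  classical
  set k := ((univ.filter (fun y => f y = 1)).card : ℝ) with hk
  have hk0 : (0:ℝ) ≤ k := Nat.cast_nonneg _
  have hkn : k ≤ n := by
    rw [hk]; exact_mod_cast (by simpa using (card_filter_le univ (fun y => f y = 1)) : _ ≤ n)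
  have hsum : ∑ y, f y = 2 * k - n := by
    have := pm_sum f hf id
    simp only [id] at this
    rw [this]; ring
  by_cases h : 0 ≤ ∑ y, f y
  · rw [if_pos h]
    have habs : ∑ y, |f y - 1| = 2 * ((n:ℝ) - k) := by
      have := pm_sum f hf (fun t => |t - 1|)
      rw [this]; norm_num; rw [← hk]; ring
    rw [habs, hsum]
    rw [hsum] at h
    nlinarith
  · rw [if_neg h]
    have habs : ∑ y, |f y - (-1)| = 2 * k := by
      have := pm_sum f hf (fun t => |t - (-1)|)
      rw [this]; norm_num; rw [← hk]; ring
    rw [habs, hsum]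
    rw [hsum] at h
    push_neg at h
    nlinarith

section Mat
variable {n : ℕ} (M : Fin n → Fin n → ℝ)

noncomputable def rowS (x : Fin n) : ℝ := ∑ y, M x y
noncomputable def colS (y : Fin n) : ℝ := ∑ x, M x y
noncomputable def totS : ℝ := ∑ x, rowS M x
noncomputable def sgn (t : ℝ) : ℝ := if 0 ≤ t then 1 else -1
noncomputable def majT : ℝ := ∑ x, sgn (rowS M x)
noncomputable def dev : ℝ := ∑ x, ∑ y, |M x y - sgn (rowS M x)|

lemma totS_eq_col : totS M = ∑ y, colS M y := by
  unfold totS rowS colS; rw [Finset.sum_comm]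

variable (hM : ∀ x y, M x y = 1 ∨ M x y = -1)
include hM

lemma rowS_abs (x : Fin n) : |rowS M x| ≤ n := by
  calc |rowS M x| ≤ ∑ y, |M x y| := abs_sum_le_sum_abs _ _
    _ = ∑ _y : Fin n, (1:ℝ) := by
          refine sum_congr rfl fun y _ => ?_
          rcases hM x y with h | h <;> simp [h]
    _ = n := by simp

lemma colS_abs (y : Fin n) : |colS M y| ≤ n := by
  calc |colS M y| ≤ ∑ x, |M x y| := abs_sum_le_sum_abs _ _
    _ = ∑ _x : Fin n, (1:ℝ) := by
          refine sum_congr rfl fun x _ => ?_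
          rcases hM x y with h | h <;> simp [h]
    _ = n := by simp

lemma rowS_sq_sum : ∑ x, (rowS M x)^2 ≤ (n:ℝ)^3 := by
  calc ∑ x, (rowS M x)^2 ≤ ∑ _x : Fin n, (n:ℝ)^2 :=
        sum_le_sum fun x _ => by
          have := rowS_abs M hM x
          nlinarith [abs_nonneg (rowS M x), sq_abs (rowS M x)]
    _ = (n:ℝ) * (n:ℝ)^2 := by simp [mul_comm]
    _ = (n:ℝ)^3 := by ring

lemma colS_sq_sum : ∑ y, (colS M y)^2 ≤ (n:ℝ)^3 := by
  calc ∑ y, (colS M y)^2 ≤ ∑ _y : Fin n, (n:ℝ)^2 :=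
        sum_le_sum fun y _ => by
          have := colS_abs M hM y
          nlinarith [abs_nonneg (colS M y), sq_abs (colS M y)]
    _ = (n:ℝ) * (n:ℝ)^2 := by simp [mul_comm]
    _ = (n:ℝ)^3 := by ring

omit hM in
lemma majT_abs : |majT M| ≤ n := by
  calc |majT M| ≤ ∑ x, |sgn (rowS M x)| := abs_sum_le_sum_abs _ _
    _ = ∑ _x : Fin n, (1:ℝ) := by
        refine sum_congr rfl fun x _ => ?_
        unfold sgn; split <;> norm_num
    _ = n := by simp

lemma totS_abs : |totS M| ≤ (n:ℝ)^2 := by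
  calc |totS M| ≤ ∑ x, |rowS M x| := abs_sum_le_sum_abs _ _
    _ ≤ ∑ _x : Fin n, (n:ℝ) := sum_le_sum fun x _ => rowS_abs M hM x
    _ = (n:ℝ)^2 := by simp [sq]

omit hM in
lemma dev_nonneg : 0 ≤ dev M :=
  sum_nonneg fun x _ => sum_nonneg fun y _ => abs_nonneg _

lemma dev_bound : (n:ℝ) * dev M ≤ (n:ℝ)^3 - ∑ x, (rowS M x)^2 := by
  unfold dev
  rw [mul_sum]
  calc ∑ x, (n:ℝ) * ∑ y, |M x y - sgn (rowS M x)|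
      ≤ ∑ x, ((n:ℝ)^2 - (rowS M x)^2) := by
        refine sum_le_sum fun x _ => ?_
        have := maj_row (fun y => M x y) (fun y => hM x y)
        simp only [sgn, rowS] at this ⊢; exact this
    _ = (n:ℝ)^3 - ∑ x, (rowS M x)^2 := by
        rw [sum_sub_distrib, sum_const]
        simp [card_univ]
        ring

omit hM in
lemma tot_maj_close : |totS M - (n:ℝ) * majT M| ≤ dev M := by
  have h : totS M - (n:ℝ) * majT M = ∑ x, ∑ y, (M x y - sgn (rowS M x)) := by
    unfold totS majT
    rw [mul_sum, ← sum_sub_distrib]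
    refine sum_congr rfl fun x _ => ?_
    rw [sum_sub_distrib, sum_const]
    unfold rowS
    simp [card_univ]
  rw [h]
  calc |∑ x, ∑ y, (M x y - sgn (rowS M x))| ≤ ∑ x, |∑ y, (M x y - sgn (rowS M x))| :=
        abs_sum_le_sum_abs _ _
    _ ≤ ∑ x, ∑ y, |M x y - sgn (rowS M x)| :=
        sum_le_sum fun x _ => abs_sum_le_sum_abs _ _
    _ = dev M := rfl

lemma col_maj_sq : ∑ y, (colS M y - majT M)^2 ≤ 2*(n:ℝ) * dev M := by
  have hw : ∀ y, |colS M y - majT M| ≤ ∑ x, |M x y - sgn (rowS M x)| := by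
    intro y
    have h : colS M y - majT M = ∑ x, (M x y - sgn (rowS M x)) := by
      unfold colS majT; rw [sum_sub_distrib]
    rw [h]
    exact abs_sum_le_sum_abs _ _
  have hw2 : ∀ y, ∑ x, |M x y - sgn (rowS M x)| ≤ 2*(n:ℝ) := by
    intro y
    calc ∑ x, |M x y - sgn (rowS M x)| ≤ ∑ _x : Fin n, (2:ℝ) :=
          sum_le_sum fun x _ => by
            have h1 : |M x y| = 1 := by rcases hM x y with h | h <;> simp [h]
            have h2 : |sgn (rowS M x)| = 1 := by unfold sgn; split <;> norm_num
            calc |M x y - sgn (rowS M x)| ≤ |M x y| + |sgn (rowS M x)| := abs_sub _ _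
              _ = 2 := by rw [h1, h2]; norm_num
      _ = 2*(n:ℝ) := by simp [mul_comm]
  calc ∑ y, (colS M y - majT M)^2
      ≤ ∑ y, 2*(n:ℝ) * ∑ x, |M x y - sgn (rowS M x)| := by
        refine sum_le_sum fun y _ => ?_
        have h0 : (0:ℝ) ≤ ∑ x, |M x y - sgn (rowS M x)| := sum_nonneg fun x _ => abs_nonneg _
        calc (colS M y - majT M)^2 = |colS M y - majT M|^2 := (sq_abs _).symm
          _ ≤ (∑ x, |M x y - sgn (rowS M x)|)^2 := by
              exact pow_le_pow_left₀ (abs_nonneg _) (hw y) 2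
          _ ≤ 2*(n:ℝ) * ∑ x, |M x y - sgn (rowS M x)| := by nlinarith [hw2 y]
    _ = 2*(n:ℝ) * dev M := by
        rw [← mul_sum]
        unfold dev
        rw [sum_comm]

end Mat
lemma key {m n : ℕ} [NeZero m] (hn : 1 ≤ n) (M : Fin m → Fin n → Fin n → ℝ)
    (hM : ∀ i x y, M i x y = 1 ∨ M i x y = -1)
    (hP : ∀ i : Fin m, ∑ x, colS (M (i-1)) x * rowS (M i) x ≤ -(99/100) * (n:ℝ)^3) :
    ∀ i : Fin m, totS (M i) * totS (M (i+1)) < 0 := by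
  have hn0 : (0:ℝ) < n := by exact_mod_cast hn
  have hn3 : (0:ℝ) < (n:ℝ)^3 := by positivity
  -- Step A: row sums of squares are large
  have hA : ∀ i : Fin m, (99/100)^2 * (n:ℝ)^3 ≤ ∑ x, (rowS (M i) x)^2 := by
    intro i
    have hcs := Finset.sum_mul_sq_le_sq_mul_sq Finset.univ
      (fun x => colS (M (i-1)) x) (fun x => rowS (M i) x)
    have hc := colS_sq_sum (M (i-1)) (hM (i-1))
    have hp := hP i
    have hrow_nonneg : (0:ℝ) ≤ ∑ x, (rowS (M i) x)^2 :=
      Finset.sum_nonneg fun x _ => sq_nonneg _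
    nlinarith [sq_nonneg (∑ x, colS (M (i-1)) x * rowS (M i) x)]
  -- Step B: deviation is small
  have hB : ∀ i : Fin m, dev (M i) ≤ (1/50) * (n:ℝ)^2 := by
    intro i
    have h1 := dev_bound (M i) (hM i)
    have h2 := hA i
    have h3 : (n:ℝ) * dev (M i) ≤ (n:ℝ) * ((1/50) * (n:ℝ)^2) := by nlinarith
    exact le_of_mul_le_mul_left h3 hn0
  -- Step C
  have hC : ∀ i : Fin m, majT (M i) * totS (M (i+1)) ≤ -(79/100) * (n:ℝ)^3 := by
    intro i
    set E := ∑ y, (colS (M i) y - majT (M i)) * rowS (M (i+1)) y with hE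
    have hsplit : ∑ y, colS (M i) y * rowS (M (i+1)) y
        = majT (M i) * totS (M (i+1)) + E := by
      rw [hE, show totS (M (i+1)) = ∑ y, rowS (M (i+1)) y from rfl, Finset.mul_sum,
        ← Finset.sum_add_distrib]
      exact Finset.sum_congr rfl fun y _ => by ring
    have hE2 : E^2 ≤ (1/25) * ((n:ℝ)^3)^2 := by
      have hcs := Finset.sum_mul_sq_le_sq_mul_sq Finset.univ
        (fun y => colS (M i) y - majT (M i)) (fun y => rowS (M (i+1)) y)
      have h1 := col_maj_sq (M i) (hM i)
      have h2 := rowS_sq_sum (M (i+1)) (hM (i+1))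
      have h3 := hB i
      have h4 : (0:ℝ) ≤ ∑ y, (rowS (M (i+1)) y)^2 :=
        Finset.sum_nonneg fun y _ => sq_nonneg _
      have h5 : (0:ℝ) ≤ ∑ y, (colS (M i) y - majT (M i))^2 :=
        Finset.sum_nonneg fun y _ => sq_nonneg _
      have hA' : ∑ y, (colS (M i) y - majT (M i))^2 ≤ (1/25) * (n:ℝ)^3 := by
        have := mul_le_mul_of_nonneg_left h3 (by positivity : (0:ℝ) ≤ 2*(n:ℝ))
        nlinarith
      calc E^2 ≤ (∑ y, (colS (M i) y - majT (M i))^2) * (∑ y, (rowS (M (i+1)) y)^2) := hcs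
        _ ≤ ((1/25) * (n:ℝ)^3) * ((n:ℝ)^3) := mul_le_mul hA' h2 h4 (by positivity)
        _ = (1/25) * ((n:ℝ)^3)^2 := by ring
    have hEge : -(1/5) * (n:ℝ)^3 ≤ E := by nlinarith [sq_nonneg (E + (1/5)*(n:ℝ)^3)]
    have hp := hP (i+1)
    rw [add_sub_cancel_right] at hp
    rw [hsplit] at hp
    linarith
  -- Step D: |totS| is large
  have hD : ∀ i : Fin m, (79/100) * (n:ℝ)^2 ≤ |totS (M i)| := by
    intro i
    have h1 := hC (i-1)
    rw [sub_add_cancel] at h1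
    have h2 : (79/100) * (n:ℝ)^3 ≤ |majT (M (i-1))| * |totS (M i)| := by
      rw [← abs_mul]
      calc (79/100) * (n:ℝ)^3 ≤ -(majT (M (i-1)) * totS (M i)) := by linarith
        _ ≤ |majT (M (i-1)) * totS (M i)| := neg_le_abs _
    have h3 := majT_abs (M (i-1))
    have h4 : (0:ℝ) ≤ |totS (M i)| := abs_nonneg _
    nlinarith
  -- Step E: |majT| is large
  have hE : ∀ i : Fin m, (79/100) * (n:ℝ) ≤ |majT (M i)| := by
    intro i
    have h1 := hC i
    have h2 : (79/100) * (n:ℝ)^3 ≤ |majT (M i)| * |totS (M (i+1))| := by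
      rw [← abs_mul]
      calc (79/100) * (n:ℝ)^3 ≤ -(majT (M i) * totS (M (i+1))) := by linarith
        _ ≤ |majT (M i) * totS (M (i+1))| := neg_le_abs _
    have h3 := totS_abs (M (i+1)) (hM (i+1))
    have h4 : (0:ℝ) ≤ |majT (M i)| := abs_nonneg _
    nlinarith [mul_le_mul_of_nonneg_left h3 h4, mul_pos hn0 hn0]
  -- Step F: totS and majT have the same sign
  have hF : ∀ i : Fin m, 0 < totS (M i) * majT (M i) := by
    intro i
    set s := totS (M i)
    set t := majT (M i)
    have hdev : |s - (n:ℝ) * t| ≤ (1/50) * (n:ℝ)^2 :=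
      (tot_maj_close (M i)).trans (hB i)
    have htabs : |t| ≤ (n:ℝ) := majT_abs (M i)
    have ht2 : ((79/100) * (n:ℝ))^2 ≤ t^2 := by
      rw [← sq_abs t]
      exact pow_le_pow_left₀ (by positivity) (hE i) 2
    have h1 : |(s - (n:ℝ)*t) * t| ≤ ((1/50) * (n:ℝ)^2) * (n:ℝ) := by
      rw [abs_mul]
      exact mul_le_mul hdev htabs (abs_nonneg _) (by positivity)
    have h2 := neg_abs_le ((s - (n:ℝ)*t) * t)
    nlinarith [mul_le_mul_of_nonneg_left ht2 (le_of_lt hn0)]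
  -- conclusion
  intro i
  have hf := hF i
  have hc := hC i
  by_contra hcon
  push_neg at hcon
  have h1 : 0 < (totS (M i) * majT (M i)) * (-(majT (M i) * totS (M (i+1)))) :=
    mul_pos hf (by nlinarith)
  have h2 : (totS (M i) * majT (M i)) * (-(majT (M i) * totS (M (i+1))))
      = -((totS (M i) * totS (M (i+1))) * (majT (M i))^2) := by ring
  rw [h2] at h1
  nlinarith [mul_nonneg hcon (sq_nonneg (majT (M i)))]

open Fin.NatCast in
lemma parity {m : ℕ} (S : Fin (2*m+1) → ℝ) (h : ∀ i, S i * S (i+1) < 0) : False := by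
  have h0 : S 0 ≠ 0 := by
    intro e
    have := h 0
    rw [e] at this
    simp at this
  have hkey : ∀ k : ℕ, 0 < S 0 * S (k : Fin (2*m+1)) * (-1)^k := by
    intro k
    induction k with
    | zero => simpa using mul_self_pos.mpr h0
    | succ k ih =>
      have hk := h (k : Fin (2*m+1))
      have hB : S (k : Fin (2*m+1)) ≠ 0 := by
        intro e; rw [e] at hk; simp at hk
      have hcast : ((k+1 : ℕ) : Fin (2*m+1)) = (k : Fin (2*m+1)) + 1 := by push_cast; ring
      rw [hcast, pow_succ]
      have h1 : 0 < (S 0 * S (k : Fin (2*m+1)) * (-1)^k)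
          * (-(S (k : Fin (2*m+1)) * S ((k : Fin (2*m+1)) + 1))) :=
        mul_pos ih (by linarith)
      have h2 : (S 0 * S (k : Fin (2*m+1)) * (-1)^k)
          * (-(S (k : Fin (2*m+1)) * S ((k : Fin (2*m+1)) + 1)))
          = (S 0 * S ((k : Fin (2*m+1)) + 1) * ((-1)^k * (-1))) * (S (k : Fin (2*m+1)))^2 := by
        ring
      rw [h2] at h1
      by_contra hcon
      push_neg at hcon
      nlinarith [sq_nonneg (S (k : Fin (2*m+1))), h1]
  have hfin := hkey (2*m+1)
  have hc : ((2*m+1 : ℕ) : Fin (2*m+1)) = 0 := by simp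
  rw [hc, Odd.neg_one_pow ⟨m, by ring⟩] at hfin
  nlinarith [sq_nonneg (S 0), hfin]

lemma fin2_mul (a b : Fin 2) :
    (if a = 0 then (1:ℝ) else -1) * (if b = 0 then 1 else -1) = if a = b then 1 else -1 := by
  fin_cases a <;> fin_cases b <;> norm_num

theorem odd_cycle_blowup_many_mono_paths :
    ∃ δ : ℝ, 0 < δ ∧ ∀ ℓ : ℕ, 1 ≤ ℓ → ∃ N : ℕ, ∀ n : ℕ, N ≤ n →
      ∀ C : Sym2 (Fin (2 * ℓ + 1) × Fin n) → Fin 2,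
        ∃ i : Fin (2 * ℓ + 1),
          δ / 2 * (n : ℝ) ^ 3 ≤
            (Nat.card {x : Fin n × Fin n × Fin n //
              C s((i - 1, x.1), (i, x.2.1)) = C s((i, x.2.1), (i + 1, x.2.2))} : ℝ) := by
  classical
  refine ⟨1/100, by norm_num, fun ℓ hℓ => ⟨1, fun n hn C => ?_⟩⟩
  by_contra hcon
  push_neg at hcon
  set M : Fin (2*ℓ+1) → Fin n → Fin n → ℝ :=
    fun i x y => if C s((i, x), (i+1, y)) = 0 then 1 else -1 with hMdef
  have hM : ∀ i x y, M i x y = 1 ∨ M i x y = -1 := by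
    intro i x y
    by_cases h : C s((i, x), (i+1, y)) = 0 <;> simp [hMdef, h]
  have hcount : ∀ i : Fin (2*ℓ+1),
      ∑ x, colS (M (i-1)) x * rowS (M i) x
        = 2 * (Nat.card {x : Fin n × Fin n × Fin n //
            C s((i - 1, x.1), (i, x.2.1)) = C s((i, x.2.1), (i + 1, x.2.2))} : ℝ)
          - (n:ℝ)^3 := by
    intro i
    have step1 : ∑ x, colS (M (i-1)) x * rowS (M i) x
        = ∑ x2 : Fin n, ∑ x1 : Fin n, ∑ x3 : Fin n, M (i-1) x1 x2 * M i x2 x3 := by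
      refine Finset.sum_congr rfl fun x2 _ => ?_
      rw [show colS (M (i-1)) x2 = ∑ x1, M (i-1) x1 x2 from rfl,
        show rowS (M i) x2 = ∑ x3, M i x2 x3 from rfl, Finset.sum_mul_sum]
    have step2 : ∀ (x1 x2 x3 : Fin n), M (i-1) x1 x2 * M i x2 x3
        = if C s(((i:Fin (2*ℓ+1)) - 1, x1), (i, x2)) = C s((i, x2), (i + 1, x3))
          then (1:ℝ) else -1 := by
      intro x1 x2 x3
      have h1 : M (i-1) x1 x2 = if C s((i - 1, x1), (i, x2)) = 0 then (1:ℝ) else -1 := by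
        rw [hMdef]
        simp only
        rw [sub_add_cancel]
      have h2 : M i x2 x3 = if C s((i, x2), (i + 1, x3)) = 0 then (1:ℝ) else -1 := rfl
      rw [h1, h2, fin2_mul]
    have step3 : ∑ x2 : Fin n, ∑ x1 : Fin n, ∑ x3 : Fin n, M (i-1) x1 x2 * M i x2 x3
        = ∑ t : Fin n × Fin n × Fin n,
            (if C s((i - 1, t.1), (i, t.2.1)) = C s((i, t.2.1), (i + 1, t.2.2))
             then (1:ℝ) else -1) := by
      rw [Finset.sum_comm, Fintype.sum_prod_type]
      refine Finset.sum_congr rfl fun x1 _ => ?_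
      rw [Fintype.sum_prod_type]
      exact Finset.sum_congr rfl fun x2 _ => Finset.sum_congr rfl fun x3 _ => step2 x1 x2 x3
    have step4 : ∑ t : Fin n × Fin n × Fin n,
        (if C s((i - 1, t.1), (i, t.2.1)) = C s((i, t.2.1), (i + 1, t.2.2))
         then (1:ℝ) else -1)
        = 2 * (Nat.card {x : Fin n × Fin n × Fin n //
            C s((i - 1, x.1), (i, x.2.1)) = C s((i, x.2.1), (i + 1, x.2.2))} : ℝ)
          - (n:ℝ)^3 := by
      have hcard : (Nat.card {x : Fin n × Fin n × Fin n //
          C s((i - 1, x.1), (i, x.2.1)) = C s((i, x.2.1), (i + 1, x.2.2))} : ℕ)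
          = (Finset.univ.filter (fun t : Fin n × Fin n × Fin n =>
              C s((i - 1, t.1), (i, t.2.1)) = C s((i, t.2.1), (i + 1, t.2.2)))).card := by
        rw [Nat.card_eq_fintype_card, Fintype.card_subtype]
      have hsplit : ∀ t : Fin n × Fin n × Fin n,
          (if C s((i - 1, t.1), (i, t.2.1)) = C s((i, t.2.1), (i + 1, t.2.2))
           then (1:ℝ) else -1)
          = 2 * (if C s((i - 1, t.1), (i, t.2.1)) = C s((i, t.2.1), (i + 1, t.2.2))
             then (1:ℝ) else 0) - 1 := by
        intro t; split <;> norm_num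
      rw [Finset.sum_congr rfl fun t _ => hsplit t, Finset.sum_sub_distrib,
        ← Finset.mul_sum, Finset.sum_boole, Finset.sum_const, Finset.card_univ]
      rw [hcard]
      simp
      ring
    rw [step1, step3, step4]
  have hP : ∀ i : Fin (2*ℓ+1),
      ∑ x, colS (M (i-1)) x * rowS (M i) x ≤ -(99/100) * (n:ℝ)^3 := by
    intro i
    rw [hcount i]
    have := hcon i
    linarith
  exact parity (fun i => totS (M i)) (key hn M hM hP)
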